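/- arXiv:1507.01367 — 3 statements merged into one kernel-verified Lean document; each statement's English description precedes it below -/
import Mathlib

section
/- Let $(a_k)_{k\geq 1}$ be a sequence of nonnegative real numbers such that $a_k^2 \leq c + \sum_{j=1}^k \beta_j a_j$ for all $k$, where $c > 0$ and $(\beta_j)$ is a sequence of nonnegative reals with $\sum_{j=1}^\infty \beta_j < +\infty$. Then $a_k \leq \sqrt{c} + \sum_{j=1}^\infty \beta_j$ for all $k$. -/
theorem discrete_gronwall_sq (a β : ℕ → ℝ) (c : ℝ) (hc : 0 < c)
    (ha : ∀ k, 0 ≤ a k) (hβ : ∀ j, 0 ≤ β j) (hsum : Summable β)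
    (h : ∀ k ≥ 1, (a k)^2 ≤ c + ∑ j ∈ Finset.Icc 1 k, β j * a j) :
    ∀ k ≥ 1, a k ≤ Real.sqrt c + ∑' j, β j := by
  intro k hk
  set T := ∑' j, β j with hT
  have hT0 : 0 ≤ T := tsum_nonneg hβ
  obtain ⟨j, hj, hjmax⟩ := Finset.exists_max_image (Finset.Icc 1 k) a
    ⟨k, by simp [hk]⟩
  obtain ⟨hj1, hjk⟩ := Finset.mem_Icc.mp hj
  set m := a j with hmdef
  have hm0 : 0 ≤ m := ha j
  have hsub : Finset.Icc 1 j ⊆ Finset.Icc 1 k := by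
    intro i hi
    obtain ⟨h1, h2⟩ := Finset.mem_Icc.mp hi
    exact Finset.mem_Icc.mpr ⟨h1, h2.trans hjk⟩
  have key : m ^ 2 ≤ c + T * m := by
    calc m ^ 2 ≤ c + ∑ i ∈ Finset.Icc 1 j, β i * a i := h j hj1
      _ ≤ c + ∑ i ∈ Finset.Icc 1 j, β i * m := by
          exact add_le_add_right (Finset.sum_le_sum fun i hi =>
            mul_le_mul_of_nonneg_left (hjmax i (hsub hi)) (hβ i)) c
      _ = c + (∑ i ∈ Finset.Icc 1 j, β i) * m := by rw [Finset.sum_mul]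
      _ ≤ c + T * m := by
          gcongr
          exact Summable.sum_le_tsum _ (fun i _ => hβ i) hsum
  have hak : a k ≤ m := hjmax k (by simp [hk])
  have hsc : 0 ≤ Real.sqrt c := Real.sqrt_nonneg c
  have hcsq : Real.sqrt c * Real.sqrt c = c := Real.mul_self_sqrt hc.le
  nlinarith [key, hak, hm0, hT0, hsc]
end

section
/- Let $\alpha \geq 3$ and let $(a_k)_{k\geq 1}$ be a sequence of nonnegative real numbers satisfying $a_{k+1} \leq \frac{k-1}{k+\alpha-1} a_k + \omega_k$ for all $k \geq 1$, where $(\omega_k)$ is a sequence of nonnegative reals with $\sum_k k\,\omega_k < +\infty$. Then $\sum_{k} a_k < +\infty$. -/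
theorem summable_of_recursive_ineq (α : ℝ) (hα : 3 ≤ α)
    (a ω : ℕ → ℝ) (ha : ∀ k, 0 ≤ a k) (hω : ∀ k, 0 ≤ ω k)
    (hsum : Summable (fun k : ℕ => (k : ℝ) * ω k))
    (hrec : ∀ k ≥ 1, a (k + 1) ≤ ((k : ℝ) - 1) / ((k : ℝ) + α - 1) * a k + ω k) :
    Summable a := by
  have hα0 : (0:ℝ) < α := by linarith
  have hα1 : (0:ℝ) < α - 1 := by linarith
  set S := ∑' k : ℕ, (k : ℝ) * ω k with hS
  have hS0 : 0 ≤ S := tsum_nonneg (fun k => mul_nonneg (Nat.cast_nonneg k) (hω k))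
  -- multiplied recurrence
  have hrec' : ∀ k : ℕ, 1 ≤ k →
      ((k:ℝ) + α - 1) * a (k+1) ≤ ((k:ℝ) - 1) * a k + ((k:ℝ) + α - 1) * ω k := by
    intro k hk
    have hk1 : (1:ℝ) ≤ (k:ℝ) := by exact_mod_cast hk
    have hden : (0:ℝ) < (k:ℝ) + α - 1 := by linarith
    have h := hrec k hk
    calc ((k:ℝ) + α - 1) * a (k+1)
        ≤ ((k:ℝ) + α - 1) * (((k : ℝ) - 1) / ((k : ℝ) + α - 1) * a k + ω k) :=
          mul_le_mul_of_nonneg_left h hden.le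
      _ = ((k:ℝ) - 1) * a k + ((k:ℝ) + α - 1) * ω k := by
          field_simp
  -- key telescoping induction
  have key : ∀ n : ℕ, (α - 1) * (∑ j ∈ Finset.range n, a (j+2)) + ((n:ℝ) + α) * a (n+2)
      ≤ ∑ k ∈ Finset.range (n+1), (((k:ℝ)+1) + α - 1) * ω (k+1) := by
    intro n
    induction n with
    | zero =>
      simp only [Finset.range_zero, Finset.sum_empty, Finset.range_one,
        Finset.sum_singleton, Nat.cast_zero]
      have h := hrec 1 le_rfl
      norm_num at h ⊢
      nlinarith [ha 2, hω 1]
    | succ n ih =>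
      have h := hrec' (n+2) (by omega)
      rw [show n+2+1 = n+1+2 by omega] at h
      rw [Finset.sum_range_succ, Finset.sum_range_succ, show n+1+1 = n+2 by omega]
      push_cast at h ⊢
      rw [mul_add]
      linarith [ih, h]
  -- bound the RHS by α * S
  have bound1 : ∀ n : ℕ,
      ∑ k ∈ Finset.range (n+1), (((k:ℝ)+1) + α - 1) * ω (k+1) ≤ α * S := by
    intro n
    have h1 : ∑ k ∈ Finset.range (n+1), (((k:ℝ)+1) + α - 1) * ω (k+1)
        ≤ ∑ k ∈ Finset.range (n+1), α * (((k:ℝ)+1) * ω (k+1)) := by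
      apply Finset.sum_le_sum
      intro k _
      have hk0 : (0:ℝ) ≤ (k:ℝ) := Nat.cast_nonneg k
      have : ((k:ℝ)+1) + α - 1 ≤ α * ((k:ℝ)+1) := by nlinarith
      have := mul_le_mul_of_nonneg_right this (hω (k+1))
      linarith [this]
    have h2 : ∑ k ∈ Finset.range (n+1), ((k:ℝ)+1) * ω (k+1)
        = ∑ k ∈ Finset.range (n+2), (k:ℝ) * ω k := by
      rw [Finset.sum_range_succ' (fun k => (k:ℝ) * ω k) (n+1)]
      push_cast
      ring
    have h3 : ∑ k ∈ Finset.range (n+2), (k:ℝ) * ω k ≤ S :=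
      Summable.sum_le_tsum (Finset.range (n+2))
        (fun i _ => mul_nonneg (Nat.cast_nonneg i) (hω i)) hsum
    calc ∑ k ∈ Finset.range (n+1), (((k:ℝ)+1) + α - 1) * ω (k+1)
        ≤ ∑ k ∈ Finset.range (n+1), α * (((k:ℝ)+1) * ω (k+1)) := h1
      _ = α * ∑ k ∈ Finset.range (n+1), ((k:ℝ)+1) * ω (k+1) := by
          rw [Finset.mul_sum]
      _ = α * ∑ k ∈ Finset.range (n+2), (k:ℝ) * ω k := by rw [h2]
      _ ≤ α * S := by
          exact mul_le_mul_of_nonneg_left h3 hα0.le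
  -- shifted partial sums are bounded
  have bound2 : ∀ n : ℕ, ∑ j ∈ Finset.range n, a (j+2) ≤ α * S / (α - 1) := by
    intro n
    have h1 := key n
    have h2 := bound1 n
    have h3 : (0:ℝ) ≤ ((n:ℝ) + α) * a (n+2) :=
      mul_nonneg (by positivity) (ha (n+2))
    rw [le_div_iff₀ hα1]
    nlinarith
  -- full partial sums are bounded
  apply summable_of_sum_range_le (c := a 0 + a 1 + α * S / (α - 1)) ha
  intro n
  have hsub : ∑ j ∈ Finset.range n, a j ≤ ∑ j ∈ Finset.range (n+2), a j := by
    apply Finset.sum_le_sum_of_subset_of_nonneg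
    · exact Finset.range_subset_range.mpr (by omega)
    · intro i _ _; exact ha i
  have hsplit : ∑ j ∈ Finset.range (n+2), a j
      = (∑ j ∈ Finset.range n, a (j+2)) + a 1 + a 0 := by
    rw [Finset.sum_range_succ' a (n+1), Finset.sum_range_succ' (fun i => a (i+1)) n]
  have := bound2 n
  linarith
end

section
/- Let $\delta > 0$, $\alpha > 1$, and let $w: [\delta, +\infty) \to \mathbb{R}$ be continuously differentiable and satisfy $\dot{w}(t) + \frac{\alpha}{t} w(t) \leq k(t)$ for some nonnegative function $k$ with $t \mapsto t\,k(t) \in L^1(\delta, +\infty)$. Then the positive part $w^+$ belongs to $L^1(\delta, +\infty)$. -/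
open MeasureTheory Set

theorem pos_part_integrable (δ α : ℝ) (hδ : 0 < δ) (hα : 1 < α)
    (w w' : ℝ → ℝ) (hw : ∀ t ∈ Ici δ, HasDerivAt w (w' t) t)
    (k : ℝ → ℝ) (hk0 : ∀ t ∈ Ici δ, 0 ≤ k t)
    (hkint : IntegrableOn (fun t => t * k t) (Ioi δ))
    (hineq : ∀ t ∈ Ici δ, w' t + (α / t) * w t ≤ k t) :
    IntegrableOn (fun t => max (w t) 0) (Ioi δ) := by
  have hαneg : -α < -1 := by linarith
  -- the weight function `g s = s^(α-1) * (s * k s)` supported on `Ioi δ`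
  set g : ℝ → ℝ := fun s => (Ioi δ).indicator (fun s => s ^ (α - 1) * (s * k s)) s with hgdef
  have gnn : ∀ s, 0 ≤ g s := by
    intro s
    by_cases hs : s ∈ Ioi δ
    · rw [hgdef]
      simp only [indicator_of_mem hs]
      have h0 : (0 : ℝ) < s := hδ.trans hs
      exact mul_nonneg (Real.rpow_nonneg h0.le _) (mul_nonneg h0.le (hk0 s (mem_Ici.mpr (le_of_lt hs))))
    · rw [hgdef]
      simp only [indicator_of_notMem hs]
      exact le_refl 0
  -- integrability of the unrestricted weight on Ioc δ T
  have gIoc : ∀ T : ℝ, IntegrableOn (fun s => s ^ (α - 1) * (s * k s)) (Ioc δ T) := by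
    intro T
    have hm : IntegrableOn (fun s => s * k s) (Ioc δ T) := hkint.mono_set Ioc_subset_Ioi_self
    apply Integrable.bdd_mul (c := |T| ^ (α - 1)) hm
    · apply ContinuousOn.aestronglyMeasurable _ measurableSet_Ioc
      intro x hx
      exact (Real.continuousAt_rpow_const x _ (Or.inl (hδ.trans hx.1).ne')).continuousWithinAt
    · rw [ae_restrict_iff' measurableSet_Ioc]
      filter_upwards with x hx
      have hx0 : (0 : ℝ) < x := hδ.trans hx.1
      rw [Real.norm_eq_abs, abs_of_nonneg (Real.rpow_nonneg hx0.le _)]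
      exact Real.rpow_le_rpow hx0.le (hx.2.trans (le_abs_self T)) (by linarith)
  have gInt : ∀ a b : ℝ, IntervalIntegrable g volume a b := by
    intro a b
    rw [intervalIntegrable_iff, hgdef, IntegrableOn,
      integrable_indicator_iff measurableSet_Ioi, IntegrableOn,
      Measure.restrict_restrict measurableSet_Ioi]
    apply (gIoc (max a b)).mono_set
    rintro x ⟨hx1, hx2⟩
    exact ⟨hx1, hx2.2⟩
  -- the primitive of g
  set F : ℝ → ℝ := fun t => ∫ s in δ..t, g s with hFdef
  have hFcont : Continuous F := intervalIntegral.continuous_primitive gInt δ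
  have hFnn : ∀ t, δ ≤ t → 0 ≤ F t := by
    intro t ht
    exact intervalIntegral.integral_nonneg ht (fun u _ => gnn u)
  -- auxiliary integrability of g on Icc δ t
  have gIcc : ∀ t : ℝ, IntegrableOn g (Icc δ t) := by
    intro t
    rw [hgdef, IntegrableOn, integrable_indicator_iff measurableSet_Ioi, IntegrableOn,
      Measure.restrict_restrict measurableSet_Ioi]
    apply (gIoc t).mono_set
    rintro x ⟨hx1, hx2⟩
    exact ⟨hx1, hx2.2⟩
  -- the key differential inequality estimate
  have key1 : ∀ t, δ ≤ t → t ^ α * w t - δ ^ α * w δ ≤ F t := by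
    intro t ht
    have hcont : ContinuousOn (fun u => u ^ α * w u) (Icc δ t) := by
      apply ContinuousOn.mul
      · intro x hx
        exact (Real.continuousAt_rpow_const x _ (Or.inl (hδ.trans_le hx.1).ne')).continuousWithinAt
      · intro x hx
        exact (hw x hx.1).continuousAt.continuousWithinAt
    have hderiv : ∀ x ∈ Ioo δ t, HasDerivWithinAt (fun u => u ^ α * w u)
        (α * x ^ (α - 1) * w x + x ^ α * w' x) (Ioi x) x := by
      intro x hx
      have hx0 : (0 : ℝ) < x := hδ.trans hx.1
      exact ((Real.hasDerivAt_rpow_const (Or.inl hx0.ne')).mul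
        (hw x (le_of_lt hx.1))).hasDerivWithinAt
    have hle : ∀ x ∈ Ioo δ t, α * x ^ (α - 1) * w x + x ^ α * w' x ≤ g x := by
      intro x hx
      have hx0 : (0 : ℝ) < x := hδ.trans hx.1
      have e1 : x ^ (α - 1) * x = x ^ α := by
        rw [← Real.rpow_add_one hx0.ne' (α - 1)]
        norm_num
      have h2 := hineq x (le_of_lt hx.1)
      have h3 : x * w' x + α * w x ≤ x * k x := by
        have h4 := mul_le_mul_of_nonneg_left h2 hx0.le
        have h5 : x * (w' x + α / x * w x) = x * w' x + α * w x := by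
          field_simp
        linarith [h5 ▸ h4]
      have h6 := mul_le_mul_of_nonneg_left h3 (Real.rpow_nonneg hx0.le (α - 1))
      rw [show g x = x ^ (α - 1) * (x * k x) from by
        rw [hgdef]; simp only [indicator_of_mem (show x ∈ Ioi δ from hx.1)]]
      calc α * x ^ (α - 1) * w x + x ^ α * w' x
          = x ^ (α - 1) * (x * w' x + α * w x) := by rw [← e1]; ring
        _ ≤ x ^ (α - 1) * (x * k x) := h6
    have hmain := intervalIntegral.sub_le_integral_of_hasDeriv_right_of_le ht hcont hderiv
      (gIcc t) hle
    exact le_trans hmain (le_of_eq rfl)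
  set C : ℝ := max (δ ^ α * w δ) 0 with hCdef
  have hC0 : 0 ≤ C := le_max_right _ _
  -- pointwise bound for the positive part
  have key2 : ∀ t ∈ Ioi δ, max (w t) 0 ≤ (C + F t) * t ^ (-α) := by
    intro t ht
    have ht0 : (0 : ℝ) < t := hδ.trans ht
    have e : t ^ α * t ^ (-α) = 1 := by
      rw [← Real.rpow_add ht0]
      simp
    have h1 : t ^ α * w t ≤ C + F t := by
      have hk := key1 t ht.le
      have := le_max_left (δ ^ α * w δ) 0
      linarith
    have hnn : 0 ≤ (C + F t) * t ^ (-α) :=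
      mul_nonneg (add_nonneg hC0 (hFnn t ht.le)) (Real.rpow_nonneg ht0.le _)
    refine max_le ?_ hnn
    have h2 := mul_le_mul_of_nonneg_right h1 (Real.rpow_nonneg ht0.le (-α))
    calc w t = t ^ α * w t * t ^ (-α) := by
          rw [mul_comm (t ^ α) (w t), mul_assoc, e, mul_one]
      _ ≤ (C + F t) * t ^ (-α) := h2
  -- integrability of t ↦ t^(-α)
  have i1 : IntegrableOn (fun t : ℝ => t ^ (-α)) (Ioi δ) :=
    integrableOn_Ioi_rpow_of_lt hαneg hδ
  have rpowCont : ContinuousOn (fun t : ℝ => t ^ (-α)) (Ioi δ) := by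
    intro x hx
    exact (Real.continuousAt_rpow_const x _ (Or.inl (hδ.trans hx).ne')).continuousWithinAt
  -- measurable representative of s * k s
  have hkm := hkint.aestronglyMeasurable
  set m' : ℝ → ℝ := hkm.mk _ with hm'def
  have m'meas : StronglyMeasurable m' := hkm.stronglyMeasurable_mk
  have m'ae : (fun t => t * k t) =ᵐ[volume.restrict (Ioi δ)] m' := hkm.ae_eq_mk
  set g₀ : ℝ → ℝ := fun s => (Ioi δ).indicator (fun s => s ^ (α - 1) * m' s) s with hg₀def
  have g₀meas : Measurable g₀ := by
    apply Measurable.indicator _ measurableSet_Ioi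
    exact (measurable_id.pow_const (α - 1)).mul m'meas.measurable
  have hgg₀ : g =ᵐ[volume.restrict (Ioi δ)] g₀ := by
    filter_upwards [m'ae, ae_restrict_mem measurableSet_Ioi] with s h1 h2
    rw [hgdef, hg₀def]
    simp only [indicator_of_mem h2, h1]
  -- the double-integral (Tonelli) bound
  have i3 : IntegrableOn (fun t => F t * t ^ (-α)) (Ioi δ) := by
    constructor
    · exact ((hFcont.continuousOn).mul rpowCont).aestronglyMeasurable measurableSet_Ioi
    · have hnn0 : 0 ≤ᵐ[volume.restrict (Ioi δ)] fun t => F t * t ^ (-α) := by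
        filter_upwards [ae_restrict_mem measurableSet_Ioi] with t ht
        exact mul_nonneg (hFnn t ht.le) (Real.rpow_nonneg (hδ.trans ht).le _)
      rw [hasFiniteIntegral_iff_ofReal hnn0]
      -- the product kernel
      set f : ℝ × ℝ → ENNReal := fun p =>
        {q : ℝ × ℝ | q.2 ≤ q.1}.indicator
          (fun q => ENNReal.ofReal (q.1 ^ (-α)) * ENNReal.ofReal (g₀ q.2)) p with hfdef
      have fmeas : Measurable f := by
        apply Measurable.indicator _ (measurableSet_le measurable_snd measurable_fst)
        exact ((measurable_fst.pow_const (-α)).ennreal_ofReal).mul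
          ((g₀meas.comp measurable_snd).ennreal_ofReal)
      have hF_eq : ∀ᵐ t ∂(volume.restrict (Ioi δ)),
          ENNReal.ofReal (F t * t ^ (-α)) =
            ∫⁻ s, f (t, s) ∂(volume.restrict (Ioi δ)) := by
        filter_upwards [ae_restrict_mem measurableSet_Ioi] with t ht
        have ht0 : (0 : ℝ) < t := hδ.trans ht
        have e1 : F t = ∫ s in Ioc δ t, g₀ s := by
          show (∫ s in δ..t, g s) = _
          rw [intervalIntegral.integral_of_le (le_of_lt ht)]
          apply setIntegral_congr_ae measurableSet_Ioc
          have h10 := ae_imp_of_ae_restrict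
            (ae_restrict_of_ae_restrict_of_subset (Ioc_subset_Ioi_self : Ioc δ t ⊆ Ioi δ) hgg₀)
          filter_upwards [h10] with s hs
          exact fun _hmem => hs _hmem
        have hint : IntegrableOn g₀ (Ioc δ t) := by
          apply Integrable.congr (μ := volume.restrict (Ioc δ t)) ((gIcc t).mono_set Ioc_subset_Icc_self)
          exact ae_restrict_of_ae_restrict_of_subset (Ioc_subset_Ioi_self : Ioc δ t ⊆ Ioi δ) hgg₀
        have hnng : 0 ≤ᵐ[volume.restrict (Ioc δ t)] g₀ := by
          have := ae_restrict_of_ae_restrict_of_subset (Ioc_subset_Ioi_self : Ioc δ t ⊆ Ioi δ) hgg₀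
          filter_upwards [this] with s hs
          rw [← hs]
          exact gnn s
        have e2 : ENNReal.ofReal (F t) = ∫⁻ s in Ioc δ t, ENNReal.ofReal (g₀ s) := by
          rw [e1, ofReal_integral_eq_lintegral_ofReal hint hnng]
        have e3 : (∫⁻ s in Ioc δ t, ENNReal.ofReal (g₀ s)) =
            ∫⁻ s, (Iic t).indicator (fun s => ENNReal.ofReal (g₀ s)) s
              ∂(volume.restrict (Ioi δ)) := by
          rw [lintegral_indicator measurableSet_Iic,
            Measure.restrict_restrict measurableSet_Iic]
          congr 1
          rw [Iic_inter_Ioi]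
        have e4 : ∀ s : ℝ, f (t, s) =
            ENNReal.ofReal (t ^ (-α)) * (Iic t).indicator (fun s => ENNReal.ofReal (g₀ s)) s := by
          intro s
          simp only [hfdef]
          by_cases h : s ≤ t
          · rw [indicator_of_mem (show (t, s) ∈ {q : ℝ × ℝ | q.2 ≤ q.1} from h),
              indicator_of_mem (show s ∈ Iic t from h)]
          · rw [indicator_of_notMem (show (t, s) ∉ {q : ℝ × ℝ | q.2 ≤ q.1} from h),
              indicator_of_notMem (show s ∉ Iic t from h), mul_zero]
        rw [ENNReal.ofReal_mul (hFnn t ht.le), mul_comm, e2, e3]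
        rw [lintegral_congr e4, lintegral_const_mul]
        exact (g₀meas.ennreal_ofReal).indicator measurableSet_Iic
      calc (∫⁻ t, ENNReal.ofReal (F t * t ^ (-α)) ∂(volume.restrict (Ioi δ)))
          = ∫⁻ t, ∫⁻ s, f (t, s) ∂(volume.restrict (Ioi δ)) ∂(volume.restrict (Ioi δ)) :=
            lintegral_congr_ae hF_eq
        _ = ∫⁻ s, ∫⁻ t, f (t, s) ∂(volume.restrict (Ioi δ)) ∂(volume.restrict (Ioi δ)) := by
            apply lintegral_lintegral_swap
            exact fmeas.aemeasurable
        _ ≤ ∫⁻ s, ENNReal.ofReal (s * k s) * ENNReal.ofReal (1 / (α - 1)) ∂(volume.restrict (Ioi δ)) := by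
            apply lintegral_mono_ae
            filter_upwards [ae_restrict_mem measurableSet_Ioi, m'ae] with s hs hms
            have hs0 : (0 : ℝ) < s := hδ.trans hs
            have e5 : ∀ t : ℝ, f (t, s) =
                ENNReal.ofReal (g₀ s) *
                  (Ici s).indicator (fun t => ENNReal.ofReal (t ^ (-α))) t := by
              intro t
              simp only [hfdef]
              by_cases h : s ≤ t
              · rw [indicator_of_mem (show (t, s) ∈ {q : ℝ × ℝ | q.2 ≤ q.1} from h),
                  indicator_of_mem (show t ∈ Ici s from h), mul_comm]
              · rw [indicator_of_notMem (show (t, s) ∉ {q : ℝ × ℝ | q.2 ≤ q.1} from h),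
                  indicator_of_notMem (show t ∉ Ici s from h), mul_zero]
            rw [lintegral_congr e5, lintegral_const_mul _
              (((measurable_id'.pow_const (-α)).ennreal_ofReal).indicator measurableSet_Ici)]
            have e6 : (∫⁻ t, (Ici s).indicator (fun t => ENNReal.ofReal (t ^ (-α))) t
                ∂(volume.restrict (Ioi δ))) =
                ∫⁻ t in Ioi s, ENNReal.ofReal (t ^ (-α)) := by
              rw [lintegral_indicator measurableSet_Ici,
                Measure.restrict_restrict measurableSet_Ici]
              rw [inter_eq_self_of_subset_left (Ici_subset_Ioi.mpr hs)]
              exact setLIntegral_congr (Ioi_ae_eq_Ici (a := s)).symm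
            have e7 : (∫⁻ t in Ioi s, ENNReal.ofReal (t ^ (-α))) =
                ENNReal.ofReal (s ^ (1 - α) / (α - 1)) := by
              rw [← ofReal_integral_eq_lintegral_ofReal
                (integrableOn_Ioi_rpow_of_lt hαneg hs0) ?_]
              · congr 1
                rw [integral_Ioi_rpow_of_lt hαneg hs0,
                  show -α + 1 = 1 - α by ring]
                have h8 : (1 : ℝ) - α ≠ 0 := by linarith
                have h9 : α - 1 ≠ 0 := by linarith
                field_simp
                ring
              · filter_upwards [ae_restrict_mem measurableSet_Ioi] with x hx
                exact Real.rpow_nonneg (hs0.trans hx).le _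
            rw [e6, e7]
            have hg₀s : g₀ s = s ^ (α - 1) * (s * k s) := by
              rw [hg₀def]
              simp only [indicator_of_mem hs, ← hms]
            have hmnn : 0 ≤ s * k s := mul_nonneg hs0.le (hk0 s (mem_Ici.mpr hs.le))
            rw [hg₀s, ← ENNReal.ofReal_mul (by positivity), ← ENNReal.ofReal_mul hmnn]
            apply le_of_eq
            congr 1
            have e8 : s ^ (α - 1) * s ^ (1 - α) = 1 := by
              rw [← Real.rpow_add hs0]
              norm_num
            calc s ^ (α - 1) * (s * k s) * (s ^ (1 - α) / (α - 1))
                = s ^ (α - 1) * s ^ (1 - α) * (s * k s) * (1 / (α - 1)) := by ring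
              _ = s * k s * (1 / (α - 1)) := by rw [e8]; ring
        _ < ⊤ := by
            rw [lintegral_mul_const' _ _ (by simp)]
            apply ENNReal.mul_lt_top _ (by simp)
            exact (lintegral_ofReal_le_lintegral_enorm _).trans_lt hkint.2
  -- put everything together
  have i2 : IntegrableOn (fun t : ℝ => C * t ^ (-α)) (Ioi δ) := i1.const_mul C
  have hCb : IntegrableOn (fun t => (C + F t) * t ^ (-α)) (Ioi δ) := by
    have h9 := i2.add i3
    apply IntegrableOn.congr_fun h9 _ measurableSet_Ioi
    intro t _
    simp only [Pi.add_apply]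
    ring
  apply Integrable.mono' hCb
  · apply ContinuousOn.aestronglyMeasurable _ measurableSet_Ioi
    exact ContinuousOn.sup (fun x hx =>
      (hw x (mem_Ici.mpr (le_of_lt hx))).continuousAt.continuousWithinAt) continuousOn_const
  · rw [ae_restrict_iff' measurableSet_Ioi]
    filter_upwards with t ht
    rw [Real.norm_eq_abs, abs_of_nonneg (le_max_right _ _)]
    exact key2 t ht
end
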